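/- arXiv:2403.05529 — 2 statements merged into one kernel-verified Lean document; each statement's English description precedes it below -/
import Mathlib

section
/- If (U,V) is a bivariate Gaussian with standard normal marginals and correlation α ∈ [-1,1], then E[h_j(U) h_k(V)] = δ_{jk} α^k for all j, k ≥ 0, where h_k denotes the k-th normalized Hermite polynomial. -/
open MeasureTheory ProbabilityTheory

/-- The normalized probabilist's Hermite polynomial `h_k(z) = He_k(z)/√(k!)`. -/
noncomputable def hermiteN (k : ℕ) (z : ℝ) : ℝ :=
  Polynomial.aeval z (Polynomial.hermite k) / Real.sqrt (Nat.factorial k)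

open Polynomial Real Filter
open scoped ENNReal NNReal

noncomputable section Herm

/-- The Gaussian weight. -/
def gw (x : ℝ) : ℝ := Real.exp (-(x ^ 2 / 2))

lemma gw_pos (x : ℝ) : 0 < gw x := Real.exp_pos _

lemma continuous_gw : Continuous gw := by
  unfold gw; continuity

/-- bound: |P(x)| * gw x ≤ C * exp (-(x^2/4)) -/
lemma poly_gw_bound (P : ℝ[X]) : ∃ C : ℝ, ∀ x : ℝ,
    |aeval x P| * gw x ≤ C * Real.exp (-(x ^ 2 / 4)) := by
  induction P using Polynomial.induction_on' with
  | add p q hp hq =>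
    obtain ⟨C, hC⟩ := hp
    obtain ⟨D, hD⟩ := hq
    refine ⟨C + D, fun x => ?_⟩
    have := hC x; have := hD x
    have habs : |aeval x (p + q)| ≤ |aeval x p| + |aeval x q| := by
      rw [map_add]; exact abs_add_le _ _
    nlinarith [gw_pos x, abs_nonneg (aeval x p), abs_nonneg (aeval x q)]
  | monomial n a =>
    refine ⟨|a| * (n.factorial * Real.exp 1), fun x => ?_⟩
    have h1 : |x| ^ n ≤ n.factorial * Real.exp |x| := by
      have := Real.pow_div_factorial_le_exp |x| (abs_nonneg x) n
      have hf : (0:ℝ) < n.factorial := by positivity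
      calc |x| ^ n = |x| ^ n / n.factorial * n.factorial := by field_simp
        _ ≤ Real.exp |x| * n.factorial := by
            apply mul_le_mul_of_nonneg_right this hf.le
        _ = n.factorial * Real.exp |x| := by ring
    have h2 : Real.exp |x| ≤ Real.exp 1 * Real.exp (x ^ 2 / 4) := by
      rw [← Real.exp_add]
      apply Real.exp_le_exp.2
      nlinarith [sq_nonneg (|x| - 2), sq_abs x]
    have h3 : gw x = Real.exp (-(x ^ 2 / 4)) * Real.exp (-(x ^ 2 / 4)) := by
      rw [gw, ← Real.exp_add]; ring_nf
    have h4 : |aeval x (monomial n a)| = |a| * |x| ^ n := by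
      simp [Polynomial.aeval_monomial, abs_mul, abs_pow]
    rw [h4, h3]
    have key : |x| ^ n * Real.exp (-(x ^ 2 / 4)) ≤ n.factorial * Real.exp 1 := by
      calc |x| ^ n * Real.exp (-(x ^ 2 / 4))
          ≤ n.factorial * Real.exp |x| * Real.exp (-(x ^ 2 / 4)) := by
            apply mul_le_mul_of_nonneg_right h1 (Real.exp_pos _).le
        _ ≤ n.factorial * (Real.exp 1 * Real.exp (x ^ 2 / 4)) * Real.exp (-(x ^ 2 / 4)) := by
            have hf : (0:ℝ) ≤ n.factorial := by positivity
            apply mul_le_mul_of_nonneg_right _ (Real.exp_pos _).le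
            exact mul_le_mul_of_nonneg_left h2 hf
        _ = n.factorial * Real.exp 1 := by
            rw [mul_assoc, mul_assoc, ← Real.exp_add]; simp
    calc |a| * |x| ^ n * (Real.exp (-(x ^ 2 / 4)) * Real.exp (-(x ^ 2 / 4)))
        = |a| * (|x| ^ n * Real.exp (-(x ^ 2 / 4))) * Real.exp (-(x ^ 2 / 4)) := by ring
      _ ≤ |a| * (n.factorial * Real.exp 1) * Real.exp (-(x ^ 2 / 4)) := by
          apply mul_le_mul_of_nonneg_right _ (Real.exp_pos _).le
          exact mul_le_mul_of_nonneg_left key (abs_nonneg a)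

lemma integrable_poly_gw (P : ℝ[X]) : Integrable (fun x => aeval x P * gw x) := by
  obtain ⟨C, hC⟩ := poly_gw_bound P
  apply Integrable.mono' (g := fun x => C * Real.exp (-(x ^ 2 / 4)))
  · have : Integrable (fun x : ℝ => Real.exp (-(4⁻¹ : ℝ) * x ^ 2)) :=
      integrable_exp_neg_mul_sq (by norm_num)
    have h := this.const_mul C
    refine h.congr (Eventually.of_forall fun x => ?_)
    ring_nf
  · exact ((P.continuous_aeval).mul continuous_gw).aestronglyMeasurable
  · refine Eventually.of_forall fun x => ?_
    rw [norm_mul, Real.norm_eq_abs, Real.norm_eq_abs, abs_of_pos (gw_pos x)]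
    exact hC x

lemma tendsto_poly_gw_atTop (P : ℝ[X]) :
    Tendsto (fun x => aeval x P * gw x) atTop (nhds 0) := by
  obtain ⟨C, hC⟩ := poly_gw_bound P
  have h1 : Tendsto (fun x : ℝ => x ^ 2 / 4) atTop atTop := by
    apply Tendsto.atTop_div_const (by norm_num)
    exact tendsto_pow_atTop (by norm_num)
  have h2 : Tendsto (fun x : ℝ => C * Real.exp (-(x ^ 2 / 4))) atTop (nhds 0) := by
    simpa using (Real.tendsto_exp_neg_atTop_nhds_zero.comp h1).const_mul C
  refine squeeze_zero_norm (fun x => ?_) h2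
  rw [norm_mul, Real.norm_eq_abs, Real.norm_eq_abs, abs_of_pos (gw_pos x)]; exact hC x

lemma tendsto_poly_gw_atBot (P : ℝ[X]) :
    Tendsto (fun x => aeval x P * gw x) atBot (nhds 0) := by
  obtain ⟨C, hC⟩ := poly_gw_bound P
  have h1 : Tendsto (fun x : ℝ => x ^ 2 / 4) atBot atTop := by
    apply Tendsto.atTop_div_const (by norm_num)
    have hneg : Tendsto (fun x : ℝ => (-x) ^ 2) atBot atTop :=
      (tendsto_pow_atTop (by norm_num)).comp tendsto_neg_atBot_atTop
    exact hneg.congr (fun x => by rw [neg_pow]; norm_num)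
  have h2 : Tendsto (fun x : ℝ => C * Real.exp (-(x ^ 2 / 4))) atBot (nhds 0) := by
    simpa using (Real.tendsto_exp_neg_atTop_nhds_zero.comp h1).const_mul C
  refine squeeze_zero_norm (fun x => ?_) h2
  rw [norm_mul, Real.norm_eq_abs, Real.norm_eq_abs, abs_of_pos (gw_pos x)]; exact hC x

end Herm

noncomputable section Herm2
open Set

lemma gw_def (x : ℝ) : gw x = Real.exp (-(x ^ 2 / 2)) := rfl

lemma hasDerivAt_gw (x : ℝ) : HasDerivAt gw (-x * gw x) x := by
  have h : HasDerivAt (fun y : ℝ => -(y ^ 2 / 2)) (-x) x := by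
    have h1 := ((hasDerivAt_pow 2 x).div_const 2).fun_neg
    exact h1.congr_deriv (by norm_num)
  have h2 := h.exp
  convert h2 using 1
  · rfl
  rw [gw_def]; ring

lemma hasDerivAt_poly_gw (P : ℝ[X]) (x : ℝ) :
    HasDerivAt (fun y => aeval y P * gw y)
      (aeval x (derivative P - X * P) * gw x) x := by
  have h := (P.hasDerivAt_aeval x).mul (hasDerivAt_gw x)
  refine h.congr_deriv ?_
  simp [map_sub, map_mul, aeval_X]
  ring

/-- Integral of an exact derivative vanishes. -/
lemma integral_poly_gw_deriv (P : ℝ[X]) :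
    ∫ x, aeval x (derivative P - X * P) * gw x = 0 := by
  set f := fun x => aeval x P * gw x with hf
  set f' := fun x => aeval x (derivative P - X * P) * gw x with hf'
  have hint : Integrable f' := integrable_poly_gw _
  have hIic : ∫ x in Iic (0:ℝ), f' x = f 0 - 0 := by
    refine integral_Iic_of_hasDerivAt_of_tendsto ?_ (fun x _ => hasDerivAt_poly_gw P x)
      hint.integrableOn (tendsto_poly_gw_atBot P)
    exact ((hasDerivAt_poly_gw P 0).continuousAt).continuousWithinAt
  have hIoi : ∫ x in Ioi (0:ℝ), f' x = 0 - f 0 := by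
    refine integral_Ioi_of_hasDerivAt_of_tendsto ?_ (fun x _ => hasDerivAt_poly_gw P x)
      hint.integrableOn (tendsto_poly_gw_atTop P)
    exact ((hasDerivAt_poly_gw P 0).continuousAt).continuousWithinAt
  have := intervalIntegral.integral_Iic_add_Ioi (b := (0:ℝ)) hint.integrableOn hint.integrableOn
  rw [hIic, hIoi] at this
  rw [← this]; ring

/-- Gaussian integration by parts. -/
lemma ibp_gw (Q : ℝ[X]) :
    ∫ x, aeval x (X * Q) * gw x = ∫ x, aeval x (derivative Q) * gw x := by
  have h := integral_poly_gw_deriv Q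
  have hsub : ∀ x : ℝ, aeval x (derivative Q - X * Q) * gw x
      = aeval x (derivative Q) * gw x - aeval x (X * Q) * gw x := by
    intro x; rw [map_sub]; ring
  rw [integral_congr_ae (Eventually.of_forall hsub),
    integral_sub (integrable_poly_gw _) (integrable_poly_gw _)] at h
  linarith

end Herm2

noncomputable section Herm3

/-- The Hermite polynomial as a real polynomial. -/
def hr (n : ℕ) : ℝ[X] := (hermite n).map (Int.castRingHom ℝ)

lemma aeval_hr (n : ℕ) (x : ℝ) : aeval x (hr n) = aeval x (hermite n) := by
  rw [hr]
  rw [show (Int.castRingHom ℝ) = algebraMap ℤ ℝ from rfl, aeval_map_algebraMap]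

lemma hr_zero : hr 0 = 1 := by simp [hr, hermite_zero]

lemma hr_succ (n : ℕ) : hr (n + 1) = X * hr n - derivative (hr n) := by
  simp only [hr, hermite_succ, Polynomial.map_sub, Polynomial.map_mul, Polynomial.map_X,
    derivative_map]

lemma derivative_hr (n : ℕ) :
    derivative (hr (n + 1)) = C ((n : ℝ) + 1) * hr n := by
  induction n with
  | zero => simp [hr_succ, hr_zero]
  | succ n ih =>
    rw [hr_succ (n + 1)]
    rw [derivative_sub, derivative_mul, derivative_X, one_mul, ih]
    rw [derivative_mul, derivative_C, zero_mul, zero_add]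
    rw [hr_succ n]
    push_cast
    have hC : (C ((n:ℝ) + 1 + 1) : ℝ[X]) = C ((n:ℝ) + 1) + C 1 := by
      rw [← C_add]
    rw [hC, C_1]
    ring

/-- ∫ He_n gw = 0 for n ≥ 1. -/
lemma integral_hr_gw (n : ℕ) :
    ∫ x, aeval x (hr (n + 1)) * gw x = 0 := by
  have h : ∫ x, aeval x (X * hr n) * gw x
      = ∫ x, aeval x (derivative (hr n)) * gw x := ibp_gw _
  rw [hr_succ]
  have hsplit : ∀ x : ℝ, aeval x (X * hr n - derivative (hr n)) * gw x
      = aeval x (X * hr n) * gw x - aeval x (derivative (hr n)) * gw x := by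
    intro x; rw [map_sub]; ring
  rw [integral_congr_ae (Filter.Eventually.of_forall hsplit),
    integral_sub (integrable_poly_gw _) (integrable_poly_gw _), h, sub_self]

lemma integral_gw : ∫ x, gw x = Real.sqrt (2 * Real.pi) := by
  have h := integral_gaussian (1/2 : ℝ)
  simp only [gw_def]
  have : ∀ x : ℝ, Real.exp (-(x ^ 2 / 2)) = Real.exp (-(1/2 : ℝ) * x ^ 2) := by
    intro x; ring_nf
  rw [integral_congr_ae (Filter.Eventually.of_forall this), h]
  rw [div_div_eq_mul_div, div_one, mul_comm]

/-- Orthogonality of Hermite polynomials wrt the Gaussian weight. -/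
lemma hr_ortho_gw (k : ℕ) : ∀ j : ℕ,
    ∫ x, aeval x (hr j) * aeval x (hr k) * gw x
      = if j = k then (k.factorial : ℝ) * Real.sqrt (2 * Real.pi) else 0 := by
  induction k with
  | zero =>
    intro j
    simp only [hr_zero, map_one, mul_one]
    cases j with
    | zero =>
      rw [if_pos rfl]
      simp only [hr_zero, map_one, mul_one, Nat.factorial_zero, Nat.cast_one, one_mul]
      exact integral_gw
    | succ n => simpa using integral_hr_gw n
  | succ k ih =>
    intro j
    cases j with
    | zero =>
      simp only [hr_zero, map_one, one_mul]
      rw [integral_hr_gw k]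
      simp [(Nat.succ_ne_zero k).symm]
    | succ i =>
      have key : ∫ x, aeval x (hr (i + 1)) * aeval x (hr (k + 1)) * gw x
          = ((i : ℝ) + 1) * ∫ x, aeval x (hr i) * aeval x (hr k) * gw x := by
        have h1 : ∀ x : ℝ, aeval x (hr (i+1)) * aeval x (hr (k+1)) * gw x
            = aeval x (X * (hr (i+1) * hr k)) * gw x
              - aeval x (hr (i+1) * derivative (hr k)) * gw x := by
          intro x
          rw [hr_succ k]
          simp only [map_sub, map_mul, aeval_X]
          ring
        rw [integral_congr_ae (Filter.Eventually.of_forall h1),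
          integral_sub (integrable_poly_gw _) (integrable_poly_gw _), ibp_gw]
        rw [derivative_mul]
        have h3 : ∀ x : ℝ, aeval x (derivative (hr (i+1)) * hr k
              + hr (i+1) * derivative (hr k)) * gw x
            = aeval x (derivative (hr (i+1)) * hr k) * gw x
              + aeval x (hr (i+1) * derivative (hr k)) * gw x := by
          intro x; rw [map_add]; ring
        rw [integral_congr_ae (Filter.Eventually.of_forall h3),
          integral_add (integrable_poly_gw _) (integrable_poly_gw _)]
        rw [add_sub_cancel_right]
        rw [derivative_hr i]
        have h4 : ∀ x : ℝ, aeval x (C ((i : ℝ) + 1) * hr i * hr k) * gw x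
            = ((i : ℝ) + 1) * (aeval x (hr i) * aeval x (hr k) * gw x) := by
          intro x
          simp only [map_mul, aeval_C]
          push_cast
          ring
        rw [integral_congr_ae (Filter.Eventually.of_forall h4), integral_const_mul]
      rw [key, ih i]
      by_cases hik : i = k
      · subst hik
        simp only [if_pos rfl, Nat.factorial_succ]
        push_cast
        ring
      · have h5 : ¬ (i + 1 = k + 1) := by omega
        simp [hik, h5]

end Herm3

noncomputable section Herm4
open Filter

lemma hr_one : hr 1 = X := by simp [hr, hermite_one]

lemma integral_id_gw : ∫ y, y * gw y = 0 := by
  have h := ibp_gw (1 : ℝ[X])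
  simp only [mul_one, aeval_X, derivative_one, map_zero, zero_mul, integral_zero] at h
  exact h

lemma inner_pair (a b x : ℝ) (hab : a ^ 2 + b ^ 2 = 1) (k : ℕ) :
    (∫ y, aeval (a * x + b * y) (hr k) * gw y
        = a ^ k * aeval x (hr k) * Real.sqrt (2 * Real.pi))
      ∧ (∫ y, aeval (a * x + b * y) (hr (k + 1)) * gw y
        = a ^ (k + 1) * aeval x (hr (k + 1)) * Real.sqrt (2 * Real.pi)) := by
  set q : ℝ[X] := C (a * x) + C b * X with hq
  have hqy : ∀ y : ℝ, aeval y q = a * x + b * y := by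
    intro y; simp [hq]
  have hq' : derivative q = C b := by
    simp [hq]
  have hQeval : ∀ (m : ℕ) (y : ℝ), aeval y ((hr m).comp q) = aeval (a * x + b * y) (hr m) := by
    intro m y
    rw [aeval_comp, hqy]
  have hint : ∀ m : ℕ, Integrable (fun y => aeval (a * x + b * y) (hr m) * gw y) := by
    intro m
    refine (integrable_poly_gw ((hr m).comp q)).congr (Eventually.of_forall fun y => ?_)
    dsimp only
    rw [hQeval]
  have hintX : ∀ m : ℕ, Integrable (fun y => y * aeval (a * x + b * y) (hr m) * gw y) := by
    intro m
    refine (integrable_poly_gw (X * (hr m).comp q)).congr (Eventually.of_forall fun y => ?_)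
    dsimp only
    rw [map_mul, aeval_X, hQeval]
  have hmid : ∀ m : ℕ, ∫ y, y * aeval (a * x + b * y) (hr (m + 1)) * gw y
      = b * ((m : ℝ) + 1) * ∫ y, aeval (a * x + b * y) (hr m) * gw y := by
    intro m
    have h1 : ∀ y : ℝ, y * aeval (a * x + b * y) (hr (m + 1)) * gw y
        = aeval y (X * (hr (m + 1)).comp q) * gw y := by
      intro y; rw [map_mul, aeval_X, hQeval]
    have hdQ : derivative ((hr (m + 1)).comp q) = C b * ((C ((m : ℝ) + 1) * hr m).comp q) := by
      rw [derivative_comp, hq', derivative_hr]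
    have h2 : ∀ y : ℝ, aeval y (derivative ((hr (m + 1)).comp q)) * gw y
        = b * ((m : ℝ) + 1) * (aeval (a * x + b * y) (hr m) * gw y) := by
      intro y
      rw [hdQ, map_mul, aeval_C, aeval_comp, hqy, map_mul, aeval_C]
      simp only [Algebra.algebraMap_self_apply]
      ring
    rw [integral_congr_ae (Eventually.of_forall h1), ibp_gw,
      integral_congr_ae (Eventually.of_forall h2), integral_const_mul]
  induction k with
  | zero =>
    have base0 : ∫ y, aeval (a * x + b * y) (hr 0) * gw y
        = a ^ 0 * aeval x (hr 0) * Real.sqrt (2 * Real.pi) := by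
      simp only [hr_zero, map_one, one_mul, pow_zero]
      exact integral_gw
    have base1 : ∫ y, aeval (a * x + b * y) (hr 1) * gw y
        = a ^ 1 * aeval x (hr 1) * Real.sqrt (2 * Real.pi) := by
      have hsplit : ∀ y : ℝ, aeval (a * x + b * y) (hr 1) * gw y
          = (a * x) * gw y + b * (y * gw y) := by
        intro y; rw [hr_one, aeval_X]; ring
      rw [integral_congr_ae (Eventually.of_forall hsplit)]
      have hi1 : Integrable (fun y : ℝ => (a * x) * gw y) := by
        refine (integrable_poly_gw (C (a * x))).congr (Eventually.of_forall fun y => ?_)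
        dsimp only
        rw [aeval_C]
        simp only [Algebra.algebraMap_self_apply]
      have hi2 : Integrable (fun y : ℝ => b * (y * gw y)) := by
        refine ((integrable_poly_gw X).congr (Eventually.of_forall fun y => ?_)).const_mul b
        dsimp only
        rw [aeval_X]
      rw [integral_add hi1 hi2, integral_const_mul, integral_const_mul, integral_gw,
        integral_id_gw, hr_one, aeval_X]
      ring
    exact ⟨base0, base1⟩
  | succ k ih =>
    obtain ⟨ihk, ihk1⟩ := ih
    refine ⟨ihk1, ?_⟩
    have hrec : hr (k + 2) = X * hr (k + 1) - C ((k : ℝ) + 1) * hr k := by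
      rw [hr_succ (k + 1), derivative_hr k]
    have hexp : ∀ y : ℝ, aeval (a * x + b * y) (hr (k + 2)) * gw y
        = ((a * x) * (aeval (a * x + b * y) (hr (k + 1)) * gw y)
          + b * (y * aeval (a * x + b * y) (hr (k + 1)) * gw y))
          - ((k : ℝ) + 1) * (aeval (a * x + b * y) (hr k) * gw y) := by
      intro y
      rw [hrec]
      simp only [map_sub, map_mul, aeval_X, aeval_C, Algebra.algebraMap_self_apply]
      ring
    have hI1 : Integrable (fun y : ℝ => (a * x) * (aeval (a * x + b * y) (hr (k + 1)) * gw y)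
        + b * (y * aeval (a * x + b * y) (hr (k + 1)) * gw y)) :=
      ((hint (k + 1)).const_mul (a * x)).add ((hintX (k + 1)).const_mul b)
    have hI2 : Integrable (fun y : ℝ => ((k : ℝ) + 1) * (aeval (a * x + b * y) (hr k) * gw y)) :=
      (hint k).const_mul _
    rw [integral_congr_ae (Eventually.of_forall hexp), integral_sub hI1 hI2,
      integral_add ((hint (k + 1)).const_mul (a * x)) ((hintX (k + 1)).const_mul b),
      integral_const_mul, integral_const_mul, integral_const_mul]
    have hmid' : ∫ y, y * aeval (a * x + b * y) (hr (k + 1)) * gw y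
        = b * ((k : ℝ) + 1) * ∫ y, aeval (a * x + b * y) (hr k) * gw y := hmid k
    rw [hmid', ihk, ihk1]
    have hx2 : aeval x (hr (k + 2)) = x * aeval x (hr (k + 1)) - ((k : ℝ) + 1) * aeval x (hr k) := by
      rw [hrec]
      simp only [map_sub, map_mul, aeval_X, aeval_C, Algebra.algebraMap_self_apply]
    have hk2 : k + 1 + 1 = k + 2 := rfl
    rw [hk2, hx2]
    linear_combination ((k : ℝ) + 1) * a ^ k * aeval x (hr k) * Real.sqrt (2 * Real.pi) * hab

end Herm4

noncomputable section Herm5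
open Filter
open scoped ENNReal NNReal

lemma gr_eq : gaussianReal 0 1
    = volume.withDensity (fun x => ((gaussianPDFReal 0 1 x).toNNReal : ℝ≥0∞)) := by
  rw [gaussianReal, if_neg one_ne_zero]
  rfl

lemma pdfReal_eq (x : ℝ) :
    gaussianPDFReal 0 1 x = (Real.sqrt (2 * Real.pi))⁻¹ * gw x := by
  rw [gaussianPDFReal, gw_def]
  norm_num
  exact Or.inl (by ring)

lemma integral_gr (f : ℝ → ℝ) :
    ∫ x, f x ∂(gaussianReal 0 1)
      = (Real.sqrt (2 * Real.pi))⁻¹ * ∫ x, f x * gw x := by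
  rw [gr_eq, integral_withDensity_eq_integral_smul
    ((measurable_gaussianPDFReal 0 1).real_toNNReal) f, ← integral_const_mul]
  congr 1
  funext x
  rw [NNReal.smul_def, Real.coe_toNNReal _ (gaussianPDFReal_nonneg 0 1 x), pdfReal_eq,
    smul_eq_mul]
  ring

lemma integrable_poly_gr (P : ℝ[X]) :
    Integrable (fun x => aeval x P) (gaussianReal 0 1) := by
  rw [gr_eq, integrable_withDensity_iff_integrable_smul
    ((measurable_gaussianPDFReal 0 1).real_toNNReal)]
  refine ((integrable_poly_gw P).const_mul ((Real.sqrt (2 * Real.pi))⁻¹)).congr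
    (Eventually.of_forall fun x => ?_)
  dsimp only
  rw [NNReal.smul_def, Real.coe_toNNReal _ (gaussianPDFReal_nonneg 0 1 x), pdfReal_eq,
    smul_eq_mul]
  ring

lemma inner_gr (a b x : ℝ) (hab : a ^ 2 + b ^ 2 = 1) (k : ℕ) :
    ∫ y, aeval (a * x + b * y) (hr k) ∂(gaussianReal 0 1)
      = a ^ k * aeval x (hr k) := by
  rw [integral_gr, (inner_pair a b x hab k).1]
  have hs : Real.sqrt (2 * Real.pi) ≠ 0 := by
    positivity
  field_simp

lemma ortho_gr (j k : ℕ) :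
    ∫ x, aeval x (hr j) * aeval x (hr k) ∂(gaussianReal 0 1)
      = if j = k then (k.factorial : ℝ) else 0 := by
  rw [integral_gr, hr_ortho_gw k j]
  have hs : Real.sqrt (2 * Real.pi) ≠ 0 := by positivity
  by_cases h : j = k
  · rw [if_pos h, if_pos h]
    field_simp
  · rw [if_neg h, if_neg h, mul_zero]

lemma integrable_prod_poly (P Q : ℝ[X]) (a b : ℝ) :
    Integrable (fun p : ℝ × ℝ => aeval p.1 P * aeval (a * p.1 + b * p.2) Q)
      ((gaussianReal 0 1).prod (gaussianReal 0 1)) := by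
  induction Q using Polynomial.induction_on' with
  | add q r hq hr =>
    refine (hq.add hr).congr (Eventually.of_forall fun p => ?_)
    simp only [Pi.add_apply]
    rw [map_add]
    ring
  | monomial n c =>
    have hterm : ∀ i : ℕ, Integrable (fun p : ℝ × ℝ =>
        aeval p.1 (C (c * a ^ i * b ^ (n - i) * (n.choose i : ℝ)) * X ^ i * P)
          * aeval p.2 (X ^ (n - i)))
        ((gaussianReal 0 1).prod (gaussianReal 0 1)) := fun i =>
      Integrable.mul_prod
        (integrable_poly_gr (C (c * a ^ i * b ^ (n - i) * (n.choose i : ℝ)) * X ^ i * P))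
        (integrable_poly_gr (X ^ (n - i)))
    refine (integrable_finset_sum (Finset.range (n + 1)) (fun i _ => hterm i)).congr
      (Eventually.of_forall fun p => ?_)
    dsimp only
    simp only [map_mul, aeval_C, aeval_X_pow, map_pow, aeval_X, Algebra.algebraMap_self_apply,
      aeval_monomial]
    rw [add_pow, Finset.mul_sum, Finset.mul_sum]
    refine Finset.sum_congr rfl fun i _ => ?_
    ring

end Herm5

noncomputable section Main
open Filter

theorem stmt_1' (α : ℝ) (hα : α ∈ Set.Icc (-1 : ℝ) 1) (j k : ℕ) :
    ∫ p : ℝ × ℝ, hermiteN j p.1 * hermiteN k (α * p.1 + Real.sqrt (1 - α ^ 2) * p.2)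
        ∂((gaussianReal 0 1).prod (gaussianReal 0 1))
      = if j = k then α ^ k else 0 := by
  obtain ⟨hα1, hα2⟩ := hα
  have hα3 : α ^ 2 ≤ 1 := by nlinarith
  set b := Real.sqrt (1 - α ^ 2) with hbdef
  have hab : α ^ 2 + b ^ 2 = 1 := by
    rw [hbdef, Real.sq_sqrt (by linarith)]; ring
  set C0 : ℝ := (Real.sqrt j.factorial)⁻¹ * (Real.sqrt k.factorial)⁻¹ with hC0
  have hconst : ∀ p : ℝ × ℝ, hermiteN j p.1 * hermiteN k (α * p.1 + b * p.2)
      = C0 * (aeval p.1 (hr j) * aeval (α * p.1 + b * p.2) (hr k)) := by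
    intro p
    rw [hermiteN, hermiteN, aeval_hr, aeval_hr, hC0]
    field_simp
  rw [integral_congr_ae (Eventually.of_forall hconst), integral_const_mul,
    integral_prod _ (integrable_prod_poly (hr j) (hr k) α b)]
  have hinner : ∀ x : ℝ, ∫ y, aeval x (hr j) * aeval (α * x + b * y) (hr k) ∂(gaussianReal 0 1)
      = α ^ k * (aeval x (hr j) * aeval x (hr k)) := by
    intro x
    rw [integral_const_mul, inner_gr α b x hab k]
    ring
  rw [integral_congr_ae (Eventually.of_forall hinner), integral_const_mul, ortho_gr j k]
  by_cases h : j = k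
  · subst h
    rw [if_pos rfl, if_pos rfl, hC0]
    have hfac : (0:ℝ) < (j.factorial : ℝ) := by
      exact_mod_cast j.factorial_pos
    have hs : Real.sqrt (j.factorial : ℝ) ≠ 0 := by positivity
    have hms : Real.sqrt (j.factorial : ℝ) * Real.sqrt (j.factorial : ℝ) = (j.factorial : ℝ) :=
      Real.mul_self_sqrt (by positivity)
    field_simp
    rw [Real.sq_sqrt hfac.le]; ring
  · rw [if_neg h, if_neg h, mul_zero, mul_zero]

end Main

/-- If `(U,V)` is bivariate Gaussian with standard normal marginals and correlation `α`
(realized as `U = p.1`, `V = α p.1 + √(1-α²) p.2` for independent standard Gaussians),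
then `E[h_j(U) h_k(V)] = δ_{jk} α^k`. -/
theorem stmt_1 (α : ℝ) (hα : α ∈ Set.Icc (-1 : ℝ) 1) (j k : ℕ) :
    ∫ p : ℝ × ℝ, hermiteN j p.1 * hermiteN k (α * p.1 + Real.sqrt (1 - α ^ 2) * p.2)
        ∂((gaussianReal 0 1).prod (gaussianReal 0 1))
      = if j = k then α ^ k else 0 := by
  exact stmt_1' α hα j k
end

section
/- Let σ(Z) = Z² e^{-Z²} and Z ∼ N(0,1). Then E[σ(Z) He_4(Z)] = −4√3/27 ≠ 0, where He_4(z) = z⁴ − 6z² + 3 is the (un-normalized) 4th Hermite polynomial. -/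
open MeasureTheory ProbabilityTheory

open Real Set in
lemma stmt9_herm4 (z : ℝ) : (Polynomial.aeval z) (Polynomial.hermite 4) = z^4 - 6*z^2 + 3 := by
  show (Polynomial.aeval z) (Polynomial.hermite (3+1)) = z^4 - 6*z^2 + 3
  rw [Polynomial.hermite_succ]
  show (Polynomial.aeval z) (_ - Polynomial.derivative (Polynomial.hermite (2+1))) = _
  rw [Polynomial.hermite_succ]
  show (Polynomial.aeval z) (Polynomial.X * (Polynomial.hermite (2+1)) - _) = _
  rw [Polynomial.hermite_succ]
  rw [show Polynomial.hermite 2 = Polynomial.hermite (1+1) from rfl, Polynomial.hermite_succ,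
    Polynomial.hermite_one]
  simp
  ring

open Real Set in
lemma stmt9_intgr (k : ℕ) :
    Integrable (fun x : ℝ => x ^ (2*k) * Real.exp (-(3/2) * x ^ 2)) := by
  have h := integrable_rpow_mul_exp_neg_mul_sq (b := 3/2) (by norm_num)
    (s := ((2*k : ℕ) : ℝ)) (lt_of_lt_of_le neg_one_lt_zero (by positivity))
  simpa only [Real.rpow_natCast] using h

open Real Set in
lemma stmt9_mom (k : ℕ) : ∫ x : ℝ, x ^ (2*k) * Real.exp (-(3/2) * x ^ 2)
    = ((3:ℝ)/2) ^ (-(2*(k:ℝ)+1)/2) * Real.Gamma ((2*(k:ℝ)+1)/2) := by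
  have h := integral_rpow_mul_exp_neg_mul_rpow (p := 2) (q := (2*k:ℝ)) (b := 3/2)
    two_pos (lt_of_lt_of_le neg_one_lt_zero (by positivity)) (by norm_num)
  have h2 : ∫ x in Ioi (0:ℝ), x ^ (2*k) * Real.exp (-(3/2) * x ^ 2)
      = ((3:ℝ)/2) ^ (-(2*(k:ℝ)+1)/2) * (1/2) * Real.Gamma ((2*(k:ℝ)+1)/2) := by
    rw [← h]
    refine setIntegral_congr_fun measurableSet_Ioi (fun x hx => ?_)
    rw [Real.rpow_two, show ((2*k:ℝ)) = ((2*k : ℕ) : ℝ) by push_cast; ring, Real.rpow_natCast]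
  have h3 : (fun x : ℝ => x ^ (2*k) * Real.exp (-(3/2) * x ^ 2))
      = fun x : ℝ => |x| ^ (2*k) * Real.exp (-(3/2) * |x| ^ 2) := by
    funext x
    rw [pow_mul x, pow_mul |x|, sq_abs]
  rw [h3]
  rw [_root_.integral_comp_abs (f := fun x : ℝ => x ^ (2*k) * Real.exp (-(3/2) * x ^ 2)), h2]
  ring

open Real in
lemma stmt9_rpow_half_neg (n : ℕ) :
    ((3:ℝ)/2) ^ (-(n:ℝ)/2) = ((Real.sqrt (3/2)) ^ n)⁻¹ := by
  have h32 : (0:ℝ) ≤ 3/2 := by norm_num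
  rw [show (-(n:ℝ)/2) = (1/2) * (-(n:ℝ)) by ring, Real.rpow_mul h32,
    Real.rpow_neg (Real.rpow_nonneg h32 _), Real.rpow_natCast, ← Real.rpow_natCast]
  norm_num [← Real.sqrt_eq_rpow]

open Real in
lemma stmt9_arith : (Real.sqrt 2 * Real.sqrt π)⁻¹ *
      (((Real.sqrt 3 / Real.sqrt 2) ^ 7)⁻¹ * (15 * Real.sqrt π / 8)
        - 6 * (((Real.sqrt 3 / Real.sqrt 2) ^ 5)⁻¹ * (3 * Real.sqrt π / 4))
        + 3 * (((Real.sqrt 3 / Real.sqrt 2) ^ 3)⁻¹ * (Real.sqrt π / 2)))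
    = -4 * Real.sqrt 3 / 27 := by
  have ha : (0:ℝ) < Real.sqrt 2 := Real.sqrt_pos.mpr (by norm_num)
  have hb : (0:ℝ) < Real.sqrt 3 := Real.sqrt_pos.mpr (by norm_num)
  have hc : (0:ℝ) < Real.sqrt π := Real.sqrt_pos.mpr Real.pi_pos
  have ha2 : Real.sqrt 2 ^ 2 = 2 := Real.sq_sqrt (by norm_num)
  have hb2 : Real.sqrt 3 ^ 2 = 3 := Real.sq_sqrt (by norm_num)
  have e7b : Real.sqrt 3 ^ 7 = 27 * Real.sqrt 3 := by
    rw [show (7:ℕ) = 2*3+1 from rfl, pow_succ, pow_mul, hb2]; norm_num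
  have e5b : Real.sqrt 3 ^ 5 = 9 * Real.sqrt 3 := by
    rw [show (5:ℕ) = 2*2+1 from rfl, pow_succ, pow_mul, hb2]; norm_num
  have e3b : Real.sqrt 3 ^ 3 = 3 * Real.sqrt 3 := by
    rw [show (3:ℕ) = 2*1+1 from rfl, pow_succ, pow_mul, hb2]; norm_num
  have e7a : Real.sqrt 2 ^ 7 = 8 * Real.sqrt 2 := by
    rw [show Real.sqrt 2 ^ 7 = (Real.sqrt 2 ^ 2) ^ 3 * Real.sqrt 2 by ring, ha2]; norm_num
  have e5a : Real.sqrt 2 ^ 5 = 4 * Real.sqrt 2 := by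
    rw [show (5:ℕ) = 2*2+1 from rfl, pow_succ, pow_mul, ha2]; norm_num
  have e3a : Real.sqrt 2 ^ 3 = 2 * Real.sqrt 2 := by
    rw [show (3:ℕ) = 2*1+1 from rfl, pow_succ, pow_mul, ha2]; norm_num
  rw [div_pow, div_pow, div_pow, e7a, e7b, e5a, e5b, e3a, e3b]
  field_simp
  ring_nf
  nlinarith [ha2, hb2, mul_pos ha hb, mul_pos (mul_pos ha hb) hc,
    sq_nonneg (Real.sqrt 2 * Real.sqrt 3), hc]

/-- For `σ(Z) = Z² e^{-Z²}` with `Z ∼ N(0,1)`,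
`E[σ(Z) He₄(Z)] = −4√3/27 ≠ 0`, where `He₄` is the 4th probabilist's Hermite
polynomial. -/
theorem stmt_9 :
    (∫ z, (z ^ 2 * Real.exp (-z ^ 2)) * (Polynomial.aeval z (Polynomial.hermite 4))
        ∂(gaussianReal 0 1) = -4 * Real.sqrt 3 / 27) ∧
    (-4 * Real.sqrt 3 / 27 : ℝ) ≠ 0 := by
  constructor
  · have step1 : (∫ z, (z ^ 2 * Real.exp (-z ^ 2)) * (Polynomial.aeval z (Polynomial.hermite 4))
        ∂(gaussianReal 0 1)) = ∫ z : ℝ, gaussianPDFReal 0 1 z *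
          ((z ^ 2 * Real.exp (-z ^ 2)) * (Polynomial.aeval z (Polynomial.hermite 4))) := by
      rw [gaussianReal_of_var_ne_zero 0 one_ne_zero]
      have hm : Measurable fun x => (gaussianPDFReal 0 1 x).toNNReal :=
        (measurable_gaussianPDFReal 0 1).real_toNNReal
      have : (gaussianPDF 0 1) = fun x => ((gaussianPDFReal 0 1 x).toNNReal : ENNReal) := rfl
      rw [this, integral_withDensity_eq_integral_smul hm]
      refine integral_congr_ae (Filter.Eventually.of_forall fun x => ?_)
      simp [NNReal.smul_def, Real.coe_toNNReal _ (gaussianPDFReal_nonneg 0 1 x)]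
    rw [step1]
    have step2 : ∀ z : ℝ, gaussianPDFReal 0 1 z *
          ((z ^ 2 * Real.exp (-z ^ 2)) * (Polynomial.aeval z (Polynomial.hermite 4)))
        = (Real.sqrt (2*Real.pi))⁻¹ *
          (z ^ (2*3) * Real.exp (-(3/2) * z ^ 2) - 6 * (z ^ (2*2) * Real.exp (-(3/2) * z ^ 2))
            + 3 * (z ^ (2*1) * Real.exp (-(3/2) * z ^ 2))) := by
      intro z
      rw [stmt9_herm4, gaussianPDFReal]
      push_cast
      rw [mul_one, mul_one, sub_zero]
      rw [show -(3/2:ℝ) * z ^ 2 = (-z^2) + (-z^2/2) by ring, Real.exp_add]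
      ring
    simp only [step2]
    rw [integral_const_mul]
    have hi32 : Integrable (fun a : ℝ => a ^ (2*3) * Real.exp (-(3/2) * a ^ 2)
        - 6 * (a ^ (2*2) * Real.exp (-(3/2) * a ^ 2))) := by
      exact (stmt9_intgr 3).sub ((stmt9_intgr 2).const_mul 6)
    rw [integral_add hi32 ((stmt9_intgr 1).const_mul 3),
      integral_sub (stmt9_intgr 3) ((stmt9_intgr 2).const_mul 6),
      integral_const_mul, integral_const_mul, stmt9_mom 1, stmt9_mom 2, stmt9_mom 3]
    have g1 : Real.Gamma ((2*(1:ℝ)+1)/2) = Real.sqrt Real.pi / 2 := by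
      rw [show (2*(1:ℝ)+1)/2 = 1/2 + 1 by norm_num, Real.Gamma_add_one (by norm_num),
        Real.Gamma_one_half_eq]
      ring
    have g2 : Real.Gamma ((2*(2:ℝ)+1)/2) = 3 * Real.sqrt Real.pi / 4 := by
      rw [show (2*(2:ℝ)+1)/2 = 3/2 + 1 by norm_num, Real.Gamma_add_one (by norm_num),
        show (3/2:ℝ) = 1/2 + 1 by norm_num, Real.Gamma_add_one (by norm_num),
        Real.Gamma_one_half_eq]
      ring
    have g3 : Real.Gamma ((2*(3:ℝ)+1)/2) = 15 * Real.sqrt Real.pi / 8 := by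
      rw [show (2*(3:ℝ)+1)/2 = 5/2 + 1 by norm_num, Real.Gamma_add_one (by norm_num),
        show (5/2:ℝ) = 3/2 + 1 by norm_num, Real.Gamma_add_one (by norm_num),
        show (3/2:ℝ) = 1/2 + 1 by norm_num, Real.Gamma_add_one (by norm_num),
        Real.Gamma_one_half_eq]
      ring
    push_cast
    rw [g1, g2, g3, show (-(2*(1:ℝ)+1)/2) = -((3:ℕ):ℝ)/2 by norm_num,
      show (-(2*(2:ℝ)+1)/2) = -((5:ℕ):ℝ)/2 by norm_num,
      show (-(2*(3:ℝ)+1)/2) = -((7:ℕ):ℝ)/2 by norm_num,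
      stmt9_rpow_half_neg, stmt9_rpow_half_neg, stmt9_rpow_half_neg]
    have h32 : Real.sqrt ((3:ℝ)/2) = Real.sqrt 3 / Real.sqrt 2 :=
      Real.sqrt_div (by norm_num) 2
    have h2pi : Real.sqrt (2*Real.pi) = Real.sqrt 2 * Real.sqrt Real.pi :=
      Real.sqrt_mul (by norm_num) _
    rw [h32, h2pi]
    calc (Real.sqrt 2 * Real.sqrt Real.pi)⁻¹ *
        (((Real.sqrt 3 / Real.sqrt 2) ^ 7)⁻¹ * (15 * Real.sqrt Real.pi / 8)
          - 6 * (((Real.sqrt 3 / Real.sqrt 2) ^ 5)⁻¹ * (3 * Real.sqrt Real.pi / 4))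
          + 3 * (((Real.sqrt 3 / Real.sqrt 2) ^ 3)⁻¹ * (Real.sqrt Real.pi / 2)))
        = -4 * Real.sqrt 3 / 27 := stmt9_arith
      _ = -4 * Real.sqrt 3 / 27 := rfl
  · have h3 : (0:ℝ) < Real.sqrt 3 := Real.sqrt_pos.mpr (by norm_num)
    intro h
    rw [div_eq_zero_iff] at h
    rcases h with h | h
    · nlinarith
    · norm_num at h
end
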